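/- Let ξ ∈ M and let v_ξ ∈ S solve the cell problem. Then A^eff(ξ) is well defined (the integrand is P-integrable), the identity A^eff(ξ)·ξ = ∫_Ω A(ω, ξ + v_ξ(ω))·(ξ + v_ξ(ω)) dP(ω) holds, and A^eff(ξ)·ξ ≥ c₀ ∫_Ω |ξ + v_ξ(ω)|^{p(ω)} dP(ω) − c₀^{-1} ≥ c₀ f(ξ) − c₀^{-1}. -/

import Mathlib

open MeasureTheory ENNReal
open scoped RealInnerProductSpace

/-- `Md d`: the space of symmetric `d × d` real matrices, identified (as in the paper)
with the Euclidean space `ℝ^{d(d+1)/2}`. -/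
abbrev Md (d : ℕ) : Type := EuclideanSpace ℝ (Fin (d * (d + 1) / 2))


private lemma meas_rpow_aux {Ω : Type*} [MeasurableSpace Ω] {f g : Ω → ℝ}
    (hf : Measurable f) (hg : Measurable g) : Measurable (fun ω => f ω ^ g ω) := by
  measurability

/-- first inequality in Lemma `l_eff-tenz`: if `v_ξ ∈ S` solves the
cell problem then `A^eff(ξ) = ∫_Ω A(ω, ξ + v_ξ(ω)) dP` is well defined,
`A^eff(ξ)·ξ = ∫_Ω A(ω, ξ + v_ξ(ω))·(ξ + v_ξ(ω)) dP`, and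
`A^eff(ξ)·ξ ≥ c₀ ∫_Ω |ξ + v_ξ|^{p(ω)} dP − c₀⁻¹ ≥ c₀ f(ξ) − c₀⁻¹`. -/
theorem stmt11
    {d : ℕ} (hd : 1 ≤ d)
    {Ω : Type*} [MeasurableSpace Ω] (P : Measure Ω) [IsProbabilityMeasure P]
    (p : Ω → ℝ) (hp : Measurable p)
    (α β : ℝ) (hα : 1 < α) (hαp : ∀ ω, α ≤ p ω) (hpβ : ∀ ω, p ω ≤ β)
    (A : Ω → Md d → Md d)
    (hAmeas : ∀ ξ : Md d, Measurable (fun ω => A ω ξ))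
    (hAcont : ∀ ω, Continuous (A ω))
    (c₀ : ℝ) (hc₀ : 0 < c₀)
    (hAcoer : ∀ ω (ξ : Md d), c₀ * ‖ξ‖ ^ p ω - c₀⁻¹ ≤ ⟪A ω ξ, ξ⟫)
    (c₁ : ℝ) (hc₁ : 0 < c₁)
    (hAgrowth : ∀ ω (ξ : Md d), ‖A ω ξ‖ ^ (p ω / (p ω - 1)) ≤ c₁ * ‖ξ‖ ^ p ω + c₁)
    -- `S` is a linear subspace of the measurable functions `Ω → M` with finite
    -- `p(⬝)`-integral and zero mean:
    (S : Set (Ω → Md d))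
    (hSmeas : ∀ w ∈ S, Measurable w)
    (hSfin : ∀ w ∈ S, ∫⁻ ω, ENNReal.ofReal (‖w ω‖ ^ p ω) ∂P < ⊤)
    (hSzero : (0 : Ω → Md d) ∈ S)
    (hSadd : ∀ w₁ ∈ S, ∀ w₂ ∈ S, w₁ + w₂ ∈ S)
    (hSsmul : ∀ (r : ℝ), ∀ w ∈ S, r • w ∈ S)
    (hSmean : ∀ w ∈ S, ∫ ω, w ω ∂P = 0)
    (f : Md d → ℝ)
    (hf : ∀ ζ : Md d, f ζ = ⨅ w : S, ∫ ω, ‖ζ + (w : Ω → Md d) ω‖ ^ p ω / p ω ∂P)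
    (ξ : Md d) (vξ : Ω → Md d) (hvξ : vξ ∈ S)
    (hsol : ∀ θ ∈ S, ∫ ω, ⟪A ω (ξ + vξ ω), θ ω⟫ ∂P = 0) :
    Integrable (fun ω => A ω (ξ + vξ ω)) P
    ∧ ⟪∫ ω, A ω (ξ + vξ ω) ∂P, ξ⟫ = ∫ ω, ⟪A ω (ξ + vξ ω), ξ + vξ ω⟫ ∂P
    ∧ c₀ * (∫ ω, ‖ξ + vξ ω‖ ^ p ω ∂P) - c₀⁻¹ ≤ ⟪∫ ω, A ω (ξ + vξ ω) ∂P, ξ⟫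
    ∧ c₀ * f ξ - c₀⁻¹ ≤ c₀ * (∫ ω, ‖ξ + vξ ω‖ ^ p ω ∂P) - c₀⁻¹ := by
  have hp1 : ∀ ω, 1 < p ω := fun ω => hα.trans_le (hαp ω)
  have hv_meas : Measurable vξ := hSmeas vξ hvξ
  have hu_meas : Measurable fun ω => ξ + vξ ω := measurable_const.add hv_meas
  have hAu_meas : Measurable fun ω => A ω (ξ + vξ ω) := by
    have hjoint : Measurable (Function.uncurry fun (ζ : Md d) (ω : Ω) => A ω ζ) :=
      measurable_uncurry_of_continuous_of_measurable (fun ω => hAcont ω) (fun ζ => hAmeas ζ)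
    exact hjoint.comp (hu_meas.prodMk measurable_id)
  set g : Ω → ℝ := fun ω => ‖ξ + vξ ω‖ ^ p ω with hg_def
  have hg_nonneg : ∀ ω, 0 ≤ g ω := fun ω => Real.rpow_nonneg (norm_nonneg _) _
  have hg_meas : Measurable g := meas_rpow_aux hu_meas.norm hp
  set h : Ω → ℝ := fun ω => ‖vξ ω‖ ^ p ω with hh_def
  have hh_nonneg : ∀ ω, 0 ≤ h ω := fun ω => Real.rpow_nonneg (norm_nonneg _) _
  have hh_meas : Measurable h := meas_rpow_aux hv_meas.norm hp
  have hh_int : Integrable h P := by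
    refine ⟨hh_meas.aestronglyMeasurable, ?_⟩
    rw [hasFiniteIntegral_iff_ofReal (Filter.Eventually.of_forall hh_nonneg)]
    exact hSfin vξ hvξ
  set K : ℝ := max 1 (‖ξ‖ ^ β) with hK_def
  have hg_le : ∀ ω, g ω ≤ (2:ℝ) ^ β * (K + h ω) := by
    intro ω
    have hp0 : (0:ℝ) ≤ p ω := (zero_lt_one.trans (hp1 ω)).le
    have h1 : ‖ξ + vξ ω‖ ≤ 2 * max ‖ξ‖ ‖vξ ω‖ := by
      calc ‖ξ + vξ ω‖ ≤ ‖ξ‖ + ‖vξ ω‖ := norm_add_le _ _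
        _ ≤ max ‖ξ‖ ‖vξ ω‖ + max ‖ξ‖ ‖vξ ω‖ := add_le_add (le_max_left _ _) (le_max_right _ _)
        _ = 2 * max ‖ξ‖ ‖vξ ω‖ := (two_mul _).symm
    have hM0 : (0:ℝ) ≤ max ‖ξ‖ ‖vξ ω‖ := le_trans (norm_nonneg ξ) (le_max_left _ _)
    calc g ω ≤ (2 * max ‖ξ‖ ‖vξ ω‖) ^ p ω := Real.rpow_le_rpow (norm_nonneg _) h1 hp0
      _ = 2 ^ p ω * (max ‖ξ‖ ‖vξ ω‖) ^ p ω := Real.mul_rpow (by norm_num) hM0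
      _ ≤ 2 ^ β * (K + h ω) := by
          apply mul_le_mul
          · exact Real.rpow_le_rpow_of_exponent_le one_le_two (hpβ ω)
          · rcases max_cases ‖ξ‖ ‖vξ ω‖ with ⟨he, _⟩ | ⟨he, _⟩
            · rw [he]
              have hxK : ‖ξ‖ ^ p ω ≤ K := by
                rcases le_total ‖ξ‖ 1 with hle | hle
                · exact le_max_of_le_left (Real.rpow_le_one (norm_nonneg _) hle hp0)
                · exact le_max_of_le_right (Real.rpow_le_rpow_of_exponent_le hle (hpβ ω))
              exact hxK.trans (le_add_of_nonneg_right (hh_nonneg ω))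
            · rw [he]
              exact le_add_of_nonneg_left (le_trans zero_le_one (le_max_left _ _))
          · exact Real.rpow_nonneg hM0 _
          · positivity
  have hKh_int : Integrable (fun ω => (2:ℝ) ^ β * (K + h ω)) P :=
    ((integrable_const K).add hh_int).const_mul _
  have hg_int : Integrable g P := by
    refine hKh_int.mono' hg_meas.aestronglyMeasurable
      (Filter.Eventually.of_forall fun ω => ?_)
    rw [Real.norm_of_nonneg (hg_nonneg ω)]; exact hg_le ω
  have hconj : ∀ ω, (p ω).HolderConjugate (p ω / (p ω - 1)) := fun ω =>
    Real.HolderConjugate.conjExponent (hp1 ω)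
  have hp'1 : ∀ ω, 1 < p ω / (p ω - 1) := fun ω => (hconj ω).symm.lt
  have hA_bound : ∀ ω, ‖A ω (ξ + vξ ω)‖ ≤ 1 + (c₁ * g ω + c₁) := by
    intro ω
    have hR : (0:ℝ) ≤ c₁ * g ω + c₁ :=
      add_nonneg (mul_nonneg hc₁.le (hg_nonneg ω)) hc₁.le
    rcases le_total ‖A ω (ξ + vξ ω)‖ 1 with hle | hle
    · linarith
    · have h2 : ‖A ω (ξ + vξ ω)‖ ≤ ‖A ω (ξ + vξ ω)‖ ^ (p ω / (p ω - 1)) := by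
        calc ‖A ω (ξ + vξ ω)‖ = ‖A ω (ξ + vξ ω)‖ ^ (1:ℝ) := (Real.rpow_one _).symm
          _ ≤ ‖A ω (ξ + vξ ω)‖ ^ (p ω / (p ω - 1)) :=
            Real.rpow_le_rpow_of_exponent_le hle (hp'1 ω).le
      have h3 := hAgrowth ω (ξ + vξ ω)
      have h4 : c₁ * ‖ξ + vξ ω‖ ^ p ω = c₁ * g ω := rfl
      linarith [h4 ▸ h3]
  have hA_int : Integrable (fun ω => A ω (ξ + vξ ω)) P := by
    refine (((integrable_const (1:ℝ)).add ((hg_int.const_mul c₁).add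
      (integrable_const c₁)))).mono' hAu_meas.aestronglyMeasurable
      (Filter.Eventually.of_forall fun ω => ?_)
    have := hA_bound ω
    simpa [add_assoc] using this
  have hAξ_int : Integrable (fun ω => ⟪A ω (ξ + vξ ω), ξ⟫) P := hA_int.inner_const ξ
  have hAv_bound : ∀ ω, |⟪A ω (ξ + vξ ω), vξ ω⟫| ≤ (c₁ * g ω + c₁) + h ω := by
    intro ω
    have h1 : |⟪A ω (ξ + vξ ω), vξ ω⟫| ≤ ‖A ω (ξ + vξ ω)‖ * ‖vξ ω‖ :=
      abs_real_inner_le_norm _ _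
    have h2 := Real.young_inequality_of_nonneg (norm_nonneg (A ω (ξ + vξ ω)))
      (norm_nonneg (vξ ω)) (hconj ω).symm
    have h3 : ‖A ω (ξ + vξ ω)‖ ^ (p ω / (p ω - 1)) / (p ω / (p ω - 1)) ≤ c₁ * g ω + c₁ :=
      (div_le_self (Real.rpow_nonneg (norm_nonneg _) _) (hp'1 ω).le).trans
        (hAgrowth ω (ξ + vξ ω))
    have h4 : ‖vξ ω‖ ^ p ω / p ω ≤ h ω := div_le_self (hh_nonneg ω) (hp1 ω).le
    linarith
  have hAv_int : Integrable (fun ω => ⟪A ω (ξ + vξ ω), vξ ω⟫) P := by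
    refine (((hg_int.const_mul c₁).add (integrable_const c₁)).add hh_int).mono'
      (hAu_meas.inner hv_meas).aestronglyMeasurable
      (Filter.Eventually.of_forall fun ω => ?_)
    rw [Real.norm_eq_abs]; exact hAv_bound ω
  have hAuu_eq : (fun ω => ⟪A ω (ξ + vξ ω), ξ + vξ ω⟫) =
      fun ω => ⟪A ω (ξ + vξ ω), ξ⟫ + ⟪A ω (ξ + vξ ω), vξ ω⟫ := by
    funext ω; exact inner_add_right _ _ _
  have hAuu_int : Integrable (fun ω => ⟪A ω (ξ + vξ ω), ξ + vξ ω⟫) P := by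
    rw [hAuu_eq]; exact hAξ_int.add hAv_int
  have hmain : ⟪∫ ω, A ω (ξ + vξ ω) ∂P, ξ⟫ = ∫ ω, ⟪A ω (ξ + vξ ω), ξ + vξ ω⟫ ∂P := by
    rw [hAuu_eq, integral_add hAξ_int hAv_int, hsol vξ hvξ, add_zero]
    have hcomm : ∫ ω, ⟪A ω (ξ + vξ ω), ξ⟫ ∂P = ∫ ω, ⟪ξ, A ω (ξ + vξ ω)⟫ ∂P :=
      integral_congr_ae (Filter.Eventually.of_forall fun ω => real_inner_comm _ _)
    rw [hcomm, integral_inner hA_int ξ]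
    exact real_inner_comm _ _
  have hineq : c₀ * (∫ ω, g ω ∂P) - c₀⁻¹ ≤ ⟪∫ ω, A ω (ξ + vξ ω) ∂P, ξ⟫ := by
    rw [hmain]
    have hle : ∀ ω, c₀ * g ω - c₀⁻¹ ≤ ⟪A ω (ξ + vξ ω), ξ + vξ ω⟫ := fun ω => hAcoer ω _
    calc c₀ * (∫ ω, g ω ∂P) - c₀⁻¹ = ∫ ω, (c₀ * g ω - c₀⁻¹) ∂P := by
          rw [integral_sub (hg_int.const_mul c₀) (integrable_const _),
            integral_const_mul, integral_const]
          simp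
      _ ≤ ∫ ω, ⟪A ω (ξ + vξ ω), ξ + vξ ω⟫ ∂P :=
          integral_mono ((hg_int.const_mul c₀).sub (integrable_const _)) hAuu_int hle
  have hfle : f ξ ≤ ∫ ω, g ω ∂P := by
    have hbdd : BddBelow (Set.range fun w : S =>
        ∫ ω, ‖ξ + (w : Ω → Md d) ω‖ ^ p ω / p ω ∂P) := by
      refine ⟨0, ?_⟩
      rintro x ⟨w, rfl⟩
      exact integral_nonneg fun ω => div_nonneg (Real.rpow_nonneg (norm_nonneg _) _)
        (zero_lt_one.trans (hp1 ω)).le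
    have h1 : f ξ ≤ ∫ ω, ‖ξ + vξ ω‖ ^ p ω / p ω ∂P := by
      rw [hf ξ]; exact ciInf_le hbdd ⟨vξ, hvξ⟩
    have hgp_int : Integrable (fun ω => g ω / p ω) P := by
      refine hg_int.mono' (hg_meas.div hp).aestronglyMeasurable
        (Filter.Eventually.of_forall fun ω => ?_)
      rw [Real.norm_of_nonneg (div_nonneg (hg_nonneg ω) (zero_lt_one.trans (hp1 ω)).le)]
      exact div_le_self (hg_nonneg ω) (hp1 ω).le
    exact h1.trans (integral_mono hgp_int hg_int fun ω => div_le_self (hg_nonneg ω) (hp1 ω).le)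
  refine ⟨hA_int, hmain, hineq, ?_⟩
  have := mul_le_mul_of_nonneg_left hfle hc₀.le
  linarith
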